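/- If D is a sharp domain, A is a nonzero ideal of D, and b is a nonzero element of A, then the fractional ideal A⁻¹ is invertible. -/

import Mathlib

/-- A domain `R` is *sharp* if whenever `I ⊇ A*B` with `I, A, B` nonzero ideals,
there exist ideals `A' ⊇ A` and `B' ⊇ B` such that `I = A'*B'`. -/
def IsSharpDomain (R : Type*) [CommRing R] : Prop :=
  ∀ I A B : Ideal R, I ≠ ⊥ → A ≠ ⊥ → B ≠ ⊥ → A * B ≤ I →
    ∃ A' B' : Ideal R, A ≤ A' ∧ B ≤ B' ∧ I = A' * B'

theorem sharp_inv_invertible (R : Type*) [CommRing R] [IsDomain R]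
    (h : IsSharpDomain R) (A : Ideal R) (hA : A ≠ ⊥) (b : R) (hb : b ∈ A) (hb0 : b ≠ 0) :
    IsUnit ((A : FractionalIdeal (nonZeroDivisors R) (FractionRing R))⁻¹) := by
  set K := FractionRing R
  set 𝔸 : FractionalIdeal (nonZeroDivisors R) K :=
    (A : FractionalIdeal (nonZeroDivisors R) K) with h𝔸
  have h𝔸0 : 𝔸 ≠ 0 := by
    rw [h𝔸, Ne, FractionalIdeal.coeIdeal_eq_zero]; exact hA
  have hbK : algebraMap R K b ≠ 0 := by
    simpa using (IsFractionRing.to_map_eq_zero_iff (K := K)).not.mpr hb0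
  set s : FractionalIdeal (nonZeroDivisors R) K :=
    FractionalIdeal.spanSingleton _ (algebraMap R K b) with hs
  have hs0 : s ≠ 0 := by
    rw [hs, Ne, FractionalIdeal.spanSingleton_eq_zero_iff]; exact hbK
  have hsA : s ≤ 𝔸 := by
    rw [hs, h𝔸, FractionalIdeal.spanSingleton_le_iff_mem]
    exact FractionalIdeal.mem_coeIdeal_of_mem _ hb
  have hAAinv : 𝔸 * 𝔸⁻¹ ≤ 1 := by
    rw [FractionalIdeal.inv_eq]; exact FractionalIdeal.mul_one_div_le_one
  -- s * 𝔸⁻¹ is an integral ideal B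
  have hle1 : s * 𝔸⁻¹ ≤ 1 :=
    le_trans (by gcongr : s * 𝔸⁻¹ ≤ 𝔸 * 𝔸⁻¹) hAAinv
  obtain ⟨B, hB⟩ := FractionalIdeal.le_one_iff_exists_coeIdeal.mp hle1
  have hAle1 : 𝔸 ≤ 1 := FractionalIdeal.coeIdeal_le_one
  have hone_mem : (1 : K) ∈ (𝔸⁻¹ : FractionalIdeal (nonZeroDivisors R) K) := by
    rw [FractionalIdeal.inv_eq, FractionalIdeal.mem_div_iff_of_ne_zero h𝔸0]
    intro y hy; rw [one_mul]; exact hAle1 hy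
  have hbB : b ∈ B := by
    have hm : algebraMap R K b ∈ s * 𝔸⁻¹ := by
      have := FractionalIdeal.mul_mem_mul
        (FractionalIdeal.mem_spanSingleton_self _ (algebraMap R K b)) hone_mem
      simpa using this
    rw [← hB] at hm
    obtain ⟨x, hx, hxe⟩ := hm
    rwa [(IsFractionRing.injective R K) hxe] at hx
  have hB0 : B ≠ ⊥ := fun hbot => hb0 (by simpa [hbot] using hbB)
  -- A * B ≤ span {b}
  have hABle : A * B ≤ Ideal.span {b} := by
    rw [← FractionalIdeal.coeIdeal_le_coeIdeal K]
    rw [FractionalIdeal.coeIdeal_mul, hB, FractionalIdeal.coeIdeal_span_singleton]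
    calc (A : FractionalIdeal (nonZeroDivisors R) K) * (s * 𝔸⁻¹)
        = (𝔸 * 𝔸⁻¹) * s := by rw [h𝔸]; ring
      _ ≤ 1 * s := by gcongr
      _ = s := one_mul s
  have hspan0 : Ideal.span {b} ≠ ⊥ := by
    rw [Ne, Ideal.span_singleton_eq_bot]; exact hb0
  obtain ⟨A', B', hAA', hBB', hprod⟩ := h (Ideal.span {b}) A B hspan0 hA hB0 hABle
  set 𝔸' : FractionalIdeal (nonZeroDivisors R) K :=
    (A' : FractionalIdeal (nonZeroDivisors R) K) with h𝔸'
  set 𝔹' : FractionalIdeal (nonZeroDivisors R) K :=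
    (B' : FractionalIdeal (nonZeroDivisors R) K) with h𝔹'
  have hkey : 𝔸' * 𝔹' = s := by
    rw [h𝔸', h𝔹', ← FractionalIdeal.coeIdeal_mul, ← hprod,
      FractionalIdeal.coeIdeal_span_singleton]
  have hsu : IsUnit s := by
    rw [hs, isUnit_iff_exists_inv]
    refine ⟨FractionalIdeal.spanSingleton _ (algebraMap R K b)⁻¹, ?_⟩
    rw [FractionalIdeal.spanSingleton_mul_spanSingleton, mul_inv_cancel₀ hbK,
      FractionalIdeal.spanSingleton_one]
  have hA'u : IsUnit 𝔸' := isUnit_of_mul_isUnit_left (hkey ▸ hsu)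
  have hA'0 : 𝔸' ≠ 0 := hA'u.ne_zero
  have hA'inv : 𝔸' * 𝔸'⁻¹ = 1 := (FractionalIdeal.mul_inv_cancel_iff_isUnit K).mpr hA'u
  -- 𝔸⁻¹ = 𝔸'⁻¹
  have heq : 𝔸⁻¹ = 𝔸'⁻¹ := by
    apply le_antisymm
    · have h1 : s⁻¹ * (s * 𝔸⁻¹) = 𝔸⁻¹ := by
        rw [← mul_assoc, hs, FractionalIdeal.spanSingleton_inv,
          FractionalIdeal.spanSingleton_mul_spanSingleton,
          inv_mul_cancel₀ hbK, FractionalIdeal.spanSingleton_one, one_mul]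
      have hB'eq : 𝔹' ≤ 𝔸'⁻¹ * s := by
        rw [← hkey, ← mul_assoc, mul_comm (𝔸'⁻¹) 𝔸', hA'inv, one_mul]
      calc 𝔸⁻¹ = s⁻¹ * (s * 𝔸⁻¹) := h1.symm
        _ = s⁻¹ * (B : FractionalIdeal (nonZeroDivisors R) K) := by rw [hB]
        _ ≤ s⁻¹ * 𝔹' := by
            gcongr s⁻¹ * ?_; exact ((FractionalIdeal.coeIdeal_le_coeIdeal K).mpr hBB')
        _ ≤ s⁻¹ * (𝔸'⁻¹ * s) := by gcongr
        _ = 𝔸'⁻¹ * (s⁻¹ * s) := by ring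
        _ = 𝔸'⁻¹ := by
            rw [hs, FractionalIdeal.spanSingleton_inv_mul K hbK, mul_one]
    · exact FractionalIdeal.inv_anti_mono h𝔸0 hA'0
        ((FractionalIdeal.coeIdeal_le_coeIdeal K).mpr hAA')
  rw [heq]
  rw [mul_comm] at hA'inv
  exact IsUnit.of_mul_eq_one _ hA'inv
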